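/- If A = (a_ij) is an extreme point of U_1, then every diagonal entry satisfies a_ii ∈ {0, 1} and every entry satisfies a_ij ∈ {0, 1/2, 1}. -/

import Mathlib

/-- Extreme point of a set: cannot be a midpoint of two distinct points of the set. -/
def IsExtremePt {X : Type*} [AddCommGroup X] [Module ℝ X] (C : Set X) (x : X) : Prop :=
  x ∈ C ∧ ∀ y ∈ C, ∀ z ∈ C, x = (1 / 2 : ℝ) • (y + z) → y = z

/-- The set `U_1` of symmetric nonnegative matrices with all principal-block sums
bounded by the block size and total sum `m`. -/
def U1 (m : ℕ) : Set (Matrix (Fin m) (Fin m) ℝ) :=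
  {A | A.IsSymm ∧ (∀ i j, 0 ≤ A i j) ∧
    (∀ α : Finset (Fin m), ∑ i ∈ α, ∑ j ∈ α, A i j ≤ (α.card : ℝ)) ∧
    (∑ i, ∑ j, A i j = (m : ℝ))}

namespace U1Aux
open Finset
variable {m : ℕ}

def fb (A : Matrix (Fin m) (Fin m) ℝ) (s : Finset (Fin m)) : ℝ := ∑ i ∈ s, ∑ j ∈ s, A i j

def Tight (A : Matrix (Fin m) (Fin m) ℝ) (s : Finset (Fin m)) : Prop := fb A s = s.card

def ind (s : Finset (Fin m)) (i : Fin m) : ℝ := if i ∈ s then 1 else 0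

lemma ind_sum (f : Fin m → ℝ) (s : Finset (Fin m)) :
    ∑ i ∈ s, f i = ∑ i : Fin m, ind s i * f i := by
  simp [ind, ite_mul, Finset.sum_ite_mem]

lemma sum_ind (A : Matrix (Fin m) (Fin m) ℝ) (s t : Finset (Fin m)) :
    ∑ i ∈ s, ∑ j ∈ t, A i j
      = ∑ i : Fin m, ∑ j : Fin m, ind s i * ind t j * A i j := by
  rw [ind_sum (fun i => ∑ j ∈ t, A i j) s]
  refine Finset.sum_congr rfl fun i _ => ?_
  rw [ind_sum (fun j => A i j) t, Finset.mul_sum]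
  exact Finset.sum_congr rfl fun j _ => by ring

lemma fb_union_inter (A : Matrix (Fin m) (Fin m) ℝ) (hs : A.IsSymm)
    (α β : Finset (Fin m)) :
    fb A (α ∪ β) + fb A (α ∩ β)
      = fb A α + fb A β + 2 * ∑ i ∈ α \ β, ∑ j ∈ β \ α, A i j := by
  have hsym : ∀ i j, A j i = A i j := hs.apply
  have hc : ∑ i ∈ α \ β, ∑ j ∈ β \ α, A i j = ∑ i ∈ β \ α, ∑ j ∈ α \ β, A i j := by
    refine Finset.sum_comm.trans ?_
    exact Finset.sum_congr rfl fun i _ => Finset.sum_congr rfl fun j _ => hsym i j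
  rw [two_mul]
  nth_rewrite 2 [hc]
  unfold fb
  rw [sum_ind A (α ∪ β) (α ∪ β), sum_ind A (α ∩ β) (α ∩ β), sum_ind A α α,
    sum_ind A β β, sum_ind A (α \ β) (β \ α), sum_ind A (β \ α) (α \ β)]
  have h0 : ∑ i : Fin m, ∑ j : Fin m,
      ((ind (α ∪ β) i * ind (α ∪ β) j + ind (α ∩ β) i * ind (α ∩ β) j
        - ind α i * ind α j - ind β i * ind β j
        - ind (α \ β) i * ind (β \ α) j - ind (β \ α) i * ind (α \ β) j) * A i j) = 0 := by
    refine Finset.sum_eq_zero fun i _ => Finset.sum_eq_zero fun j _ => ?_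
    by_cases h1 : i ∈ α <;> by_cases h2 : i ∈ β <;> by_cases h3 : j ∈ α <;>
      by_cases h4 : j ∈ β <;>
      simp [ind, h1, h2, h3, h4] <;> ring
  simp only [sub_mul, add_mul, Finset.sum_sub_distrib, Finset.sum_add_distrib] at h0
  linarith [h0]

lemma fb_le (hA : A ∈ U1 m) (s : Finset (Fin m)) : fb A s ≤ s.card := hA.2.2.1 s

lemma tight_inter {A : Matrix (Fin m) (Fin m) ℝ} (hA : A ∈ U1 m)
    {α β : Finset (Fin m)} (hα : Tight A α) (hβ : Tight A β) :
    Tight A (α ∩ β) ∧ ∀ i ∈ α \ β, ∀ j ∈ β \ α, A i j = 0 := by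
  obtain ⟨hsym, hpos, hble, -⟩ := hA
  have hI := fb_union_inter A hsym α β
  have hcn : ∀ i ∈ α \ β, (0:ℝ) ≤ ∑ j ∈ β \ α, A i j :=
    fun i _ => Finset.sum_nonneg fun j _ => hpos i j
  have hc : (0:ℝ) ≤ ∑ i ∈ α \ β, ∑ j ∈ β \ α, A i j := Finset.sum_nonneg hcn
  have h1 : fb A (α ∪ β) ≤ ((α ∪ β).card : ℝ) := hble _
  have h2 : fb A (α ∩ β) ≤ ((α ∩ β).card : ℝ) := hble _
  have hcard : ((α ∪ β).card : ℝ) + ((α ∩ β).card : ℝ) = (α.card : ℝ) + β.card := by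
    exact_mod_cast congrArg (fun n : ℕ => (n : ℝ)) (Finset.card_union_add_card_inter α β)
  unfold Tight at hα hβ ⊢
  have hc0 : ∑ i ∈ α \ β, ∑ j ∈ β \ α, A i j = 0 := by linarith
  refine ⟨by linarith, ?_⟩
  intro i hi j hj
  have h3 := (Finset.sum_eq_zero_iff_of_nonneg hcn).1 hc0 i hi
  exact (Finset.sum_eq_zero_iff_of_nonneg fun j _ => hpos i j).1 h3 j hj

lemma tight_univ {A : Matrix (Fin m) (Fin m) ℝ} (hA : A ∈ U1 m) :
    Tight A Finset.univ := by
  unfold Tight fb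
  rw [hA.2.2.2]
  simp

lemma exists_min_tight {A : Matrix (Fin m) (Fin m) ℝ} (hA : A ∈ U1 m) (i : Fin m) :
    ∃ t, Tight A t ∧ i ∈ t ∧ ∀ s, Tight A s → i ∈ s → t ⊆ s := by
  classical
  have hu : Tight A (Finset.univ) := tight_univ hA
  set fam : Finset (Finset (Fin m)) := Finset.univ.filter (fun s => Tight A s ∧ i ∈ s) with hfam
  have hne : fam.Nonempty := ⟨Finset.univ, by simp [hfam, hu]⟩
  obtain ⟨t, htf, hmin⟩ := Finset.exists_min_image fam Finset.card hne
  rw [hfam, Finset.mem_filter] at htf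
  refine ⟨t, htf.2.1, htf.2.2, ?_⟩
  intro s hs his
  have hts : Tight A (t ∩ s) := (tight_inter hA htf.2.1 hs).1
  have hmem : t ∩ s ∈ fam := by
    rw [hfam, Finset.mem_filter]
    exact ⟨Finset.mem_univ _, hts, Finset.mem_inter.2 ⟨htf.2.2, his⟩⟩
  have hle := hmin _ hmem
  have heq : t ∩ s = t :=
    Finset.eq_of_subset_of_card_le (Finset.inter_subset_left) hle
  intro x hx
  rw [← heq] at hx
  exact (Finset.mem_inter.1 hx).2

lemma fb_add_smul (A D : Matrix (Fin m) (Fin m) ℝ) (t : ℝ) (s : Finset (Fin m)) :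
    fb (A + t • D) s = fb A s + t * fb D s := by
  unfold fb
  simp [Matrix.add_apply, Matrix.smul_apply, Finset.sum_add_distrib, Finset.mul_sum,
    smul_eq_mul]

lemma perturb {A : Matrix (Fin m) (Fin m) ℝ} (hext : IsExtremePt (U1 m) A)
    (D : Matrix (Fin m) (Fin m) ℝ) (hDs : D.IsSymm)
    (hsupp : ∀ i j, A i j = 0 → D i j = 0)
    (ht : ∀ s : Finset (Fin m), Tight A s → fb D s = 0) : D = 0 := by
  classical
  have hA := hext.1
  obtain ⟨hsym, hpos, hble, htot⟩ := hA
  set g1 : Fin m × Fin m → ℝ :=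
    fun p => if D p.1 p.2 = 0 then 1 else A p.1 p.2 / |D p.1 p.2| with hg1
  set g2 : Finset (Fin m) → ℝ :=
    fun s => if fb D s = 0 then 1 else ((s.card : ℝ) - fb A s) / |fb D s| with hg2
  set F : Finset ℝ := insert 1 ((Finset.univ.image g1) ∪ (Finset.univ.image g2)) with hF
  have hFne : F.Nonempty := ⟨1, Finset.mem_insert_self _ _⟩
  set ε : ℝ := F.min' hFne with hε
  have hεle : ∀ x ∈ F, ε ≤ x := fun x hx => Finset.min'_le F x hx
  have hεpos : 0 < ε := by
    rw [hε]
    rw [Finset.lt_min'_iff]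
    intro x hx
    rw [hF, Finset.mem_insert, Finset.mem_union] at hx
    rcases hx with rfl | hx | hx
    · norm_num
    · obtain ⟨p, -, rfl⟩ := Finset.mem_image.1 hx
      rw [hg1]
      by_cases h0 : D p.1 p.2 = 0
      · simp [h0]
      · have hApos : 0 < A p.1 p.2 := by
          rcases lt_or_eq_of_le (hpos p.1 p.2) with h | h
          · exact h
          · exact absurd (hsupp p.1 p.2 h.symm) h0
        simp only [h0, if_false]
        exact div_pos hApos (abs_pos.2 h0)
    · obtain ⟨s, -, rfl⟩ := Finset.mem_image.1 hx
      rw [hg2]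
      by_cases h0 : fb D s = 0
      · simp [h0]
      · have hnt : ¬ Tight A s := fun hT => h0 (ht s hT)
        have hlt : fb A s < s.card := lt_of_le_of_ne (hble s) hnt
        simp only [h0, if_false]
        exact div_pos (by linarith) (abs_pos.2 h0)
  have key : ∀ t : ℝ, |t| ≤ ε → A + t • D ∈ U1 m := by
    intro t htle
    refine ⟨?_, ?_, ?_, ?_⟩
    · unfold Matrix.IsSymm at *
      rw [Matrix.transpose_add, Matrix.transpose_smul, hsym, hDs]
    · intro i j
      by_cases hD0 : D i j = 0
      · simpa [Matrix.add_apply, Matrix.smul_apply, hD0] using hpos i j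
      · have hApos : 0 < A i j := by
          rcases lt_or_eq_of_le (hpos i j) with h | h
          · exact h
          · exact absurd (hsupp i j h.symm) hD0
        have h1 : ε ≤ A i j / |D i j| := by
          have : g1 (i, j) ∈ F := by
            rw [hF, Finset.mem_insert, Finset.mem_union]
            right; left
            exact Finset.mem_image_of_mem g1 (Finset.mem_univ (i, j))
          have := hεle _ this
          simpa only [hg1, hg2, if_neg hD0] using this
        have habs : |t * D i j| ≤ A i j := by
          rw [abs_mul]
          calc |t| * |D i j| ≤ ε * |D i j| :=
                mul_le_mul_of_nonneg_right htle (abs_nonneg _)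
            _ ≤ (A i j / |D i j|) * |D i j| :=
                mul_le_mul_of_nonneg_right h1 (abs_nonneg _)
            _ = A i j := div_mul_cancel₀ _ (abs_ne_zero.2 hD0)
        have := (abs_le.1 habs).1
        simp only [Matrix.add_apply, Matrix.smul_apply, smul_eq_mul]
        linarith
    · intro s
      show fb (A + t • D) s ≤ (s.card : ℝ)
      rw [fb_add_smul]
      by_cases hT : Tight A s
      · rw [ht s hT, mul_zero, add_zero]
        exact hble s
      · by_cases hD0 : fb D s = 0
        · rw [hD0, mul_zero, add_zero]; exact hble s
        · have h2 : ε ≤ ((s.card : ℝ) - fb A s) / |fb D s| := by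
            have : g2 s ∈ F := by
              rw [hF, Finset.mem_insert, Finset.mem_union]
              right; right
              exact Finset.mem_image_of_mem g2 (Finset.mem_univ s)
            have := hεle _ this
            simpa only [hg1, hg2, if_neg hD0] using this
          have habs : |t * fb D s| ≤ (s.card : ℝ) - fb A s := by
            rw [abs_mul]
            calc |t| * |fb D s| ≤ ε * |fb D s| :=
                  mul_le_mul_of_nonneg_right htle (abs_nonneg _)
              _ ≤ (((s.card : ℝ) - fb A s) / |fb D s|) * |fb D s| :=
                  mul_le_mul_of_nonneg_right h2 (abs_nonneg _)
              _ = (s.card : ℝ) - fb A s := div_mul_cancel₀ _ (abs_ne_zero.2 hD0)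
          have := (abs_le.1 habs).2
          linarith
    · show fb (A + t • D) Finset.univ = (m : ℝ)
      rw [fb_add_smul, ht _ (tight_univ ⟨hsym, hpos, hble, htot⟩), mul_zero, add_zero]
      have := tight_univ (m := m) (A := A) ⟨hsym, hpos, hble, htot⟩
      unfold Tight at this
      rw [this]
      simp
  have h1 : A + ε • D ∈ U1 m := key ε (by rw [abs_of_pos hεpos])
  have h2 : A + (-ε) • D ∈ U1 m := key (-ε) (by rw [abs_neg, abs_of_pos hεpos])
  have hmid : A = (1 / 2 : ℝ) • ((A + ε • D) + (A + (-ε) • D)) := by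
    module
  have heq := hext.2 _ h1 _ h2 hmid
  have h3 : ε • D = (-ε) • D := by
    have := congrArg (fun M => M - A) heq
    simpa [add_sub_cancel_left] using this
  have h4 : (ε - (-ε)) • D = 0 := by
    rw [sub_smul, h3, sub_self]
  rcases smul_eq_zero.1 h4 with h | h
  · exfalso; linarith
  · exact h

/-- single entry matrix -/
def e (k l : Fin m) : Matrix (Fin m) (Fin m) ℝ :=
  Matrix.of fun i j => if i = k ∧ j = l then (1 : ℝ) else 0

lemma fb_e (k l : Fin m) (s : Finset (Fin m)) :
    fb (e k l) s = if k ∈ s ∧ l ∈ s then 1 else 0 := by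
  classical
  unfold fb e
  have hin : ∀ i : Fin m, ∑ j ∈ s, (if i = k ∧ j = l then (1:ℝ) else 0)
      = if i = k then (if l ∈ s then 1 else 0) else 0 := by
    intro i
    by_cases hik : i = k
    · subst hik
      simp [Finset.sum_ite_eq' s l (fun _ => (1:ℝ))]
    · simp [hik]
  simp only [Matrix.of_apply]
  rw [Finset.sum_congr rfl fun i _ => hin i]
  by_cases hks : k ∈ s
  · rw [Finset.sum_ite_eq' s k (fun _ => if l ∈ s then (1:ℝ) else 0)]
    simp [hks]
  · rw [Finset.sum_ite_eq' s k (fun _ => if l ∈ s then (1:ℝ) else 0)]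
    simp [hks]

lemma uniq {A : Matrix (Fin m) (Fin m) ℝ} (hA : A ∈ U1 m)
    (hext : IsExtremePt (U1 m) A) {α : Finset (Fin m)}
    (k1 l1 k2 l2 : Fin m)
    (hk1 : k1 ∈ α) (hl1 : l1 ∈ α) (hk2 : k2 ∈ α) (hl2 : l2 ∈ α)
    (hm1 : ∀ s, Tight A s → k1 ∈ s → α ⊆ s) (hm2 : ∀ s, Tight A s → k2 ∈ s → α ⊆ s)
    (hp1 : 0 < A k1 l1) (hp2 : 0 < A k2 l2) :
    (k1 = k2 ∧ l1 = l2) ∨ (k1 = l2 ∧ l1 = k2) := by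
  classical
  by_contra hne
  have hne1 : ¬(k1 = k2 ∧ l1 = l2) := fun hx => hne (Or.inl hx)
  have hne2 : ¬(k1 = l2 ∧ l1 = k2) := fun hx => hne (Or.inr hx)
  have hsymA : ∀ i j, A j i = A i j := hA.1.apply
  set D : Matrix (Fin m) (Fin m) ℝ := e k1 l1 + e l1 k1 - e k2 l2 - e l2 k2 with hD
  have hDapp : ∀ i j, D i j = (if i = k1 ∧ j = l1 then (1:ℝ) else 0)
      + (if i = l1 ∧ j = k1 then 1 else 0) - (if i = k2 ∧ j = l2 then 1 else 0)
      - (if i = l2 ∧ j = k2 then 1 else 0) := by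
    intro i j
    simp [hD, e, Matrix.sub_apply, Matrix.add_apply]
  have hDs : D.IsSymm := by
    rw [Matrix.IsSymm]
    ext i j
    rw [Matrix.transpose_apply, hDapp i j, hDapp j i]
    have c1 : (j = k1 ∧ i = l1) ↔ (i = l1 ∧ j = k1) := and_comm
    have c2 : (j = l1 ∧ i = k1) ↔ (i = k1 ∧ j = l1) := and_comm
    have c3 : (j = k2 ∧ i = l2) ↔ (i = l2 ∧ j = k2) := and_comm
    have c4 : (j = l2 ∧ i = k2) ↔ (i = k2 ∧ j = l2) := and_comm
    rw [if_congr c1 rfl rfl, if_congr c2 rfl rfl, if_congr c3 rfl rfl, if_congr c4 rfl rfl]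
    ring
  have hsupp : ∀ i j, A i j = 0 → D i j = 0 := by
    intro i j h0
    have n1 : ¬(i = k1 ∧ j = l1) := by
      rintro ⟨rfl, rfl⟩; exact absurd h0 (ne_of_gt hp1)
    have n2 : ¬(i = l1 ∧ j = k1) := by
      rintro ⟨rfl, rfl⟩
      rw [hsymA] at h0
      exact absurd h0 (ne_of_gt hp1)
    have n3 : ¬(i = k2 ∧ j = l2) := by
      rintro ⟨rfl, rfl⟩; exact absurd h0 (ne_of_gt hp2)
    have n4 : ¬(i = l2 ∧ j = k2) := by
      rintro ⟨rfl, rfl⟩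
      rw [hsymA] at h0
      exact absurd h0 (ne_of_gt hp2)
    rw [hDapp, if_neg n1, if_neg n2, if_neg n3, if_neg n4]
    ring
  have htD : ∀ s : Finset (Fin m), Tight A s → fb D s = 0 := by
    intro s hs
    have hfb : fb D s = fb (e k1 l1) s + fb (e l1 k1) s - fb (e k2 l2) s - fb (e l2 k2) s := by
      unfold fb
      simp [hD, Matrix.sub_apply, Matrix.add_apply, Finset.sum_add_distrib,
        Finset.sum_sub_distrib]
    rw [hfb, fb_e, fb_e, fb_e, fb_e]
    have i1 : (k1 ∈ s ∧ l1 ∈ s) ↔ α ⊆ s :=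
      ⟨fun h => hm1 s hs h.1, fun h => ⟨h hk1, h hl1⟩⟩
    have i2 : (l1 ∈ s ∧ k1 ∈ s) ↔ α ⊆ s := by rw [and_comm]; exact i1
    have i3 : (k2 ∈ s ∧ l2 ∈ s) ↔ α ⊆ s :=
      ⟨fun h => hm2 s hs h.1, fun h => ⟨h hk2, h hl2⟩⟩
    have i4 : (l2 ∈ s ∧ k2 ∈ s) ↔ α ⊆ s := by rw [and_comm]; exact i3
    rw [if_congr i1 rfl rfl, if_congr i2 rfl rfl, if_congr i3 rfl rfl, if_congr i4 rfl rfl]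
    by_cases hαs : α ⊆ s <;> simp [hαs]
  have hD0 : D = 0 := perturb hext D hDs hsupp htD
  have := congrFun (congrFun hD0 k1) l1
  rw [hDapp] at this
  rw [if_pos ⟨rfl, rfl⟩, if_neg hne1, if_neg hne2] at this
  by_cases hkl : k1 = l1 ∧ l1 = k1
  · rw [if_pos hkl] at this; norm_num at this
  · rw [if_neg hkl] at this; norm_num at this

lemma fb_singleton (A : Matrix (Fin m) (Fin m) ℝ) (i : Fin m) : fb A {i} = A i i := by
  simp [fb]

lemma fb_empty (A : Matrix (Fin m) (Fin m) ℝ) : fb A ∅ = 0 := by simp [fb]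

/-- Decomposition: for i ∈ t, fb A t = fb A (t.erase i) + A i i + 2 * ∑_{x ∈ t.erase i} A x i -/
lemma fb_erase (A : Matrix (Fin m) (Fin m) ℝ) (hs : A.IsSymm) {t : Finset (Fin m)}
    {i : Fin m} (hit : i ∈ t) :
    fb A t = fb A (t.erase i) + A i i + 2 * ∑ x ∈ t.erase i, A x i := by
  have hI := fb_union_inter A hs (t.erase i) {i}
  have h1 : t.erase i ∪ {i} = t := by
    rw [Finset.union_comm, ← Finset.insert_eq, Finset.insert_erase hit]
  have h2 : t.erase i ∩ {i} = ∅ := by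
    rw [Finset.inter_singleton_of_notMem (Finset.notMem_erase i t)]
  have h3 : t.erase i \ {i} = t.erase i := by
    rw [Finset.sdiff_singleton_eq_erase, Finset.erase_idem]
  have h4 : ({i} : Finset (Fin m)) \ t.erase i = {i} := by
    rw [Finset.sdiff_eq_self_iff_disjoint]
    simp [Finset.disjoint_singleton_left]
  rw [h1, h2, h3, h4, fb_empty, fb_singleton] at hI
  have h5 : ∑ x ∈ t.erase i, ∑ j ∈ ({i} : Finset (Fin m)), A x j
      = ∑ x ∈ t.erase i, A x i := by
    refine Finset.sum_congr rfl fun x _ => ?_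
    simp
  rw [h5] at hI
  linarith

lemma diag_one {A : Matrix (Fin m) (Fin m) ℝ} (hA : A ∈ U1 m)
    (hext : IsExtremePt (U1 m) A) (i : Fin m) (hpos : 0 < A i i) : A i i = 1 := by
  obtain ⟨t, htT, hit, hmin⟩ := exists_min_tight hA i
  have hsym : A.IsSymm := hA.1
  have hsymA : ∀ a b, A b a = A a b := hsym.apply
  have hposA : ∀ a b, 0 ≤ A a b := hA.2.1
  have hle1 : A i i ≤ 1 := by
    have := hA.2.2.1 {i}
    simpa using this
  have hcross : ∀ l ∈ t.erase i, A l i = 0 := by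
    intro l hl
    obtain ⟨hlne, hlt⟩ := Finset.mem_erase.1 hl
    by_contra h0
    have hpl : 0 < A i l := by
      rw [hsymA] at h0
      exact lt_of_le_of_ne (hposA i l) (Ne.symm h0)
    have := uniq hA hext i i i l hit hit hit hlt hmin hmin hpos hpl
    rcases this with ⟨-, h⟩ | ⟨h, -⟩ <;> exact hlne h.symm
  have hdec := fb_erase A hsym hit
  have hc0 : ∑ x ∈ t.erase i, A x i = 0 := Finset.sum_eq_zero hcross
  rw [hc0, mul_zero, add_zero] at hdec
  have hB : fb A (t.erase i) ≤ ((t.erase i).card : ℝ) := hA.2.2.1 _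
  have hcard : ((t.erase i).card : ℝ) = (t.card : ℝ) - 1 := by
    rw [Finset.card_erase_of_mem hit]
    have h1 : 1 ≤ t.card := Finset.card_pos.2 ⟨i, hit⟩
    push_cast [h1]
    ring
  have htt : fb A t = (t.card : ℝ) := htT
  rw [hcard] at hB
  linarith

lemma offdiag_val {A : Matrix (Fin m) (Fin m) ℝ} (hA : A ∈ U1 m)
    (hext : IsExtremePt (U1 m) A) (i j : Fin m) (hij : i ≠ j) (hpos : 0 < A i j)
    {t : Finset (Fin m)} (htT : Tight A t) (hit : i ∈ t) (hjt : j ∈ t)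
    (hmin : ∀ s, Tight A s → i ∈ s → t ⊆ s) :
    A i j = 1 / 2 ∨ A i j = 1 := by
  classical
  have hsym : A.IsSymm := hA.1
  have hsymA : ∀ a b, A b a = A a b := hsym.apply
  have hposA : ∀ a b, 0 ≤ A a b := hA.2.1
  -- positivity of entries hit by uniq
  have hAii : A i i = 0 := by
    by_contra h0
    have hpii : 0 < A i i := lt_of_le_of_ne (hposA i i) (Ne.symm h0)
    have := uniq hA hext i j i i hit hjt hit hit hmin hmin hpos hpii
    rcases this with ⟨-, h⟩ | ⟨-, h⟩ <;> exact hij h.symm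
  have huniq' : ∀ l ∈ t, 0 < A i l → l = j := by
    intro l hl hpl
    have := uniq hA hext i l i j hit hl hit hjt hmin hmin hpl hpos
    rcases this with ⟨-, h⟩ | ⟨h1, h2⟩
    · exact h
    · exact absurd h1 hij
  by_cases hjfree : ∀ s, Tight A s → j ∈ s → t ⊆ s
  · -- j is also minimal: A i j = 1
    right
    have hAjj : A j j = 0 := by
      by_contra h0
      have hpjj : 0 < A j j := lt_of_le_of_ne (hposA j j) (Ne.symm h0)
      have := uniq hA hext j j i j hjt hjt hit hjt hjfree hmin hpjj hpos
      rcases this with ⟨h, -⟩ | ⟨-, h⟩ <;> exact hij h.symm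
    have huniqj : ∀ l ∈ t, 0 < A j l → l = i := by
      intro l hl hpl
      have := uniq hA hext j l i j hjt hl hit hjt hjfree hmin hpl hpos
      rcases this with ⟨h1, h2⟩ | ⟨-, h⟩
      · exact absurd h1.symm hij
      · exact h
    -- decompose t = B ∪ {i,j}
    set P : Finset (Fin m) := {i, j} with hP
    have hPsub : P ⊆ t := by
      intro x hx
      rcases Finset.mem_insert.1 hx with rfl | hx
      · exact hit
      · rw [Finset.mem_singleton.1 hx]; exact hjt
    set B : Finset (Fin m) := t \ P with hB
    have h1 : B ∪ P = t := Finset.sdiff_union_of_subset hPsub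
    have h2 : B ∩ P = ∅ := by
      rw [hB]
      simp [Finset.sdiff_inter_self]
    have h3 : B \ P = B := by
      rw [hB]; exact Finset.sdiff_idem t P
    have h4 : P \ B = P := by
      rw [Finset.sdiff_eq_self_iff_disjoint, hB]
      exact disjoint_sdiff_self_right
    have hI := fb_union_inter A hsym B P
    rw [h1, h2, h3, h4, fb_empty] at hI
    have hfbP : fb A P = 2 * A i j := by
      unfold fb
      rw [hP]
      rw [Finset.sum_pair hij, Finset.sum_pair hij, Finset.sum_pair hij]
      rw [hAii, hAjj, hsymA i j]
      ring
    have hcross0 : ∑ x ∈ B, ∑ y ∈ P, A x y = 0 := by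
      refine Finset.sum_eq_zero fun x hx => ?_
      obtain ⟨hxt, hxP⟩ := Finset.mem_sdiff.1 hx
      have hxi : x ≠ i := fun h => hxP (by rw [h, hP]; exact Finset.mem_insert_self _ _)
      have hxj : x ≠ j := fun h => hxP (by rw [h, hP]; simp)
      refine Finset.sum_eq_zero fun y hy => ?_
      rcases Finset.mem_insert.1 hy with hyi | hy
      · -- y = i : A x i = A i x = 0
        rw [hyi]
        by_contra h0
        have : 0 < A i x := by
          rw [hsymA] at h0
          exact lt_of_le_of_ne (hposA i x) (Ne.symm h0)
        exact hxj (huniq' x hxt this)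
      · rw [Finset.mem_singleton.1 hy]
        by_contra h0
        have : 0 < A j x := by
          rw [hsymA] at h0
          exact lt_of_le_of_ne (hposA j x) (Ne.symm h0)
        exact hxi (huniqj x hxt this)
    rw [hfbP, hcross0, mul_zero, add_zero] at hI
    have hBle : fb A B ≤ (B.card : ℝ) := hA.2.2.1 _
    have hcardB : (B.card : ℝ) = (t.card : ℝ) - 2 := by
      rw [hB, Finset.card_sdiff_of_subset hPsub, hP]
      have hcP : ({i, j} : Finset (Fin m)).card = 2 := by
        rw [Finset.card_insert_of_notMem (by simp [hij]), Finset.card_singleton]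
      rw [hcP]
      have h2t : 2 ≤ t.card := by
        calc 2 = P.card := by rw [hP, hcP]
          _ ≤ t.card := Finset.card_le_card hPsub
      push_cast [h2t]
      ring
    have hub : A i j ≤ 1 := by
      have := hA.2.2.1 P
      rw [hP] at this
      have hfbP' : ∑ x ∈ ({i, j} : Finset (Fin m)), ∑ y ∈ ({i, j} : Finset (Fin m)), A x y
          = 2 * A i j := hfbP
      rw [hfbP'] at this
      have hcP : (({i, j} : Finset (Fin m)).card : ℝ) = 2 := by
        rw [Finset.card_insert_of_notMem (by simp [hij]), Finset.card_singleton]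
        norm_num
      rw [hcP] at this
      linarith
    have htt : fb A t = (t.card : ℝ) := htT
    rw [hcardB] at hBle
    linarith
  · -- j is not minimal: A i j = 1/2
    left
    push_neg at hjfree
    obtain ⟨s0, hs0T, hjs0, hns⟩ := hjfree
    obtain ⟨u, huT, hju, huminj⟩ := exists_min_tight hA j
    have hiu : i ∉ u := by
      intro hiu
      exact hns ((hmin u huT hiu).trans (huminj s0 hs0T hjs0))
    -- lower bound via decomposition of t
    have hdec := fb_erase A hsym hit
    have hcr : ∑ x ∈ t.erase i, A x i = A i j := by
      rw [Finset.sum_eq_single_of_mem j (Finset.mem_erase.2 ⟨Ne.symm hij, hjt⟩)]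
      · exact hsymA i j
      · intro x hx hxj
        obtain ⟨hxi, hxt⟩ := Finset.mem_erase.1 hx
        by_contra h0
        have : 0 < A i x := by
          rw [hsymA] at h0
          exact lt_of_le_of_ne (hposA i x) (Ne.symm h0)
        exact hxj (huniq' x hxt this)
    rw [hcr, hAii, add_zero] at hdec
    have hBle : fb A (t.erase i) ≤ ((t.erase i).card : ℝ) := hA.2.2.1 _
    have hcard : ((t.erase i).card : ℝ) = (t.card : ℝ) - 1 := by
      rw [Finset.card_erase_of_mem hit]
      have h1 : 1 ≤ t.card := Finset.card_pos.2 ⟨i, hit⟩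
      push_cast [h1]
      ring
    have htt : fb A t = (t.card : ℝ) := htT
    rw [hcard] at hBle
    -- upper bound via u ∪ {i}
    have hI2 := fb_union_inter A hsym u {i}
    have g2 : u ∩ {i} = ∅ := Finset.inter_singleton_of_notMem hiu
    have g3 : u \ {i} = u := by
      rw [Finset.sdiff_singleton_eq_erase, Finset.erase_eq_of_notMem hiu]
    have g4 : ({i} : Finset (Fin m)) \ u = {i} := by
      rw [Finset.sdiff_eq_self_iff_disjoint]
      simp [Finset.disjoint_singleton_left, hiu]
    rw [g2, g3, g4, fb_empty, fb_singleton, hAii] at hI2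
    have hcr2 : A i j ≤ ∑ x ∈ u, ∑ y ∈ ({i} : Finset (Fin m)), A x y := by
      have : ∀ x ∈ u, ∑ y ∈ ({i} : Finset (Fin m)), A x y = A x i := fun x _ => by simp
      rw [Finset.sum_congr rfl this]
      have := Finset.single_le_sum (f := fun x => A x i) (fun x _ => hposA x i) hju
      simpa only [hsymA i j] using this
    have hfuu : fb A (u ∪ {i}) ≤ ((u ∪ {i}).card : ℝ) := hA.2.2.1 _
    have hcardu : ((u ∪ {i}).card : ℝ) = (u.card : ℝ) + 1 := by
      rw [Finset.card_union_of_disjoint (by simp [Finset.disjoint_singleton_right, hiu])]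
      push_cast [Finset.card_singleton]
      ring
    have huu : fb A u = (u.card : ℝ) := huT
    rw [hcardu] at hfuu
    linarith

end U1Aux

/-- Every extreme point of `U_1` has diagonal entries in {0,1} and all entries in
{0, 1/2, 1}. -/
theorem extreme_U1_entries (m : ℕ) (A : Matrix (Fin m) (Fin m) ℝ)
    (h : IsExtremePt (U1 m) A) :
    (∀ i, A i i = 0 ∨ A i i = 1) ∧
      (∀ i j, A i j = 0 ∨ A i j = 1 / 2 ∨ A i j = 1) := by
  classical
  have hA : A ∈ U1 m := h.1
  have hposA : ∀ i j, 0 ≤ A i j := hA.2.1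
  have hsymA : ∀ a b : Fin m, A b a = A a b := hA.1.apply
  have hdiag : ∀ i, A i i = 0 ∨ A i i = 1 := by
    intro i
    rcases eq_or_lt_of_le (hposA i i) with h0 | hlt
    · exact Or.inl h0.symm
    · exact Or.inr (U1Aux.diag_one hA h i hlt)
  refine ⟨hdiag, ?_⟩
  intro i j
  rcases eq_or_lt_of_le (hposA i j) with h0 | hlt
  · exact Or.inl h0.symm
  by_cases hij : i = j
  · subst hij
    rcases hdiag i with h0 | h1
    · exact absurd h0 (ne_of_gt hlt)
    · exact Or.inr (Or.inr h1)
  obtain ⟨t, htT, hit, hmint⟩ := U1Aux.exists_min_tight hA i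
  obtain ⟨u, huT, hju, hminu⟩ := U1Aux.exists_min_tight hA j
  by_cases hjt : j ∈ t
  · exact Or.inr (U1Aux.offdiag_val hA h i j hij hlt htT hit hjt hmint)
  by_cases hiu : i ∈ u
  · have hlt' : 0 < A j i := by rw [hsymA]; exact hlt
    have := U1Aux.offdiag_val hA h j i (Ne.symm hij) hlt' huT hju hiu hminu
    rw [hsymA i j] at this
    exact Or.inr this
  · exfalso
    have hz := (U1Aux.tight_inter hA htT huT).2 i
      (Finset.mem_sdiff.2 ⟨hit, hiu⟩) j (Finset.mem_sdiff.2 ⟨hju, hjt⟩)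
    exact absurd hz (ne_of_gt hlt)
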